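/- Suppose premiums are adjusted according to the reported number of claims. Then for every i ∈ {1,…,l}, every integer z with 0 < z ≤ c_i and every n ≥ 1: ψ'_i(0;z,n+1) = Σ_{j=1}^l t_{ij}(0)·ψ_j(c_i−z, n)·f_{XY}(0,0) + Σ_{j=1}^l t_{ij}(1)·Σ_{x=1}^{c_i−z} ψ_j(c_i−z−x, n)·f_{XY}(x,0) + Σ_{j=1}^l t_{ij}(2)·[ Σ_{x=1}^{c_i−z−1} Σ_{y=1}^{c_i−z−x} ψ_j(c_i−z−x−y, n)·f_{XY}(x,y) + q·Σ_{y=1}^{c_j} ψ'_j(0;y,n)·ξ_y(c_i−z) + q·Σ_{y=c_j+1}^∞ ξ_y(c_i−z) ] + (1−q)·Σ_{y=1}^∞ ξ_y(c_i−z) + Σ_{x=c_i−z+1}^∞ f_X(x), and moreover ψ'_i(0;z,1) = (1−q)·Σ_{y=1}^∞ ξ_y(c_i−z) + Σ_{x=c_i−z+1}^∞ f_X(x). -/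

import Mathlib

open scoped BigOperators

noncomputable section

namespace DelayedClaims

/-- Marginal pmf of the main claim: `f_X(x) = Σ_y f_{XY}(x,y)`. -/
def fX (f : ℕ → ℕ → ℝ) (x : ℕ) : ℝ := ∑' y : ℕ, f x y

/-- `ξ_y(m) = Σ_{x=1}^m f_{XY}(x, y + m - x)`. -/
def xi (f : ℕ → ℕ → ℝ) (y m : ℕ) : ℝ := ∑ x ∈ Finset.Icc 1 m, f x (y + m - x)

/-- Probability weight of a single period outcome `(x, y, d)`:
`d = true` means the settlement of the by-claim `y` is delayed (probability `q`). -/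
def w (f : ℕ → ℕ → ℝ) (q : ℝ) (p : ℕ × ℕ × Bool) : ℝ :=
  f p.1 p.2.1 * (if p.2.2 then q else 1 - q)

/-- Probability weight of an `n`-period path of i.i.d. period outcomes. -/
def pathWeight (f : ℕ → ℕ → ℝ) (q : ℝ) (n : ℕ) (ω : Fin n → ℕ × ℕ × Bool) : ℝ :=
  ∏ s : Fin n, w f q (ω s)

/-- Ruin indicator along a path.  Here `c` lists the premium levels,
`T i s` is the premium level following level `i` when the period adjustment
statistic equals `s`, `stat x y d carry` is the period adjustment statistic,
`i` is the current premium level, `u` the current surplus, and `carry` the amount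
of the by-claim whose settlement was delayed from the previous period (`0` if none).
In each period the premium `c i` is received up front and the settled amount
`x + (1-d)·y + carry` is paid at the end of the period; ruin occurs as soon as
the surplus becomes negative at the end of some period. -/
def ruined (l : ℕ) (c : Fin l → ℕ) (T : Fin l → ℕ → Fin l)
    (stat : ℕ → ℕ → Bool → ℕ → ℕ) :
    (n : ℕ) → (Fin n → ℕ × ℕ × Bool) → Fin l → ℤ → ℕ → Bool
  | 0, _, _, _, _ => false
  | n + 1, ω, i, u, carry =>
    let x : ℕ := (ω 0).1
    let y : ℕ := (ω 0).2.1
    let d : Bool := (ω 0).2.2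
    let u' : ℤ := u + (c i : ℤ) - ((x : ℤ) + (if d then 0 else (y : ℤ)) + (carry : ℤ))
    if u' < 0 then true
    else ruined l c T stat n (fun s => ω s.succ) (T i (stat x y d carry)) u'
      (if d then y else 0)

/-- `ψ'_i(u; z, n)`: the finite-time ruin probability over horizon `n` of the model with
an up-front delayed by-claim `z` settled at the end of period 1 (taking `z = 0` gives the
model without an up-front delayed by-claim), with initial premium level `i` and
initial surplus `u`.  By convention it equals `1` for `u < 0` and `0` for `n = 0`. -/
def psiAux (l : ℕ) (c : Fin l → ℕ) (T : Fin l → ℕ → Fin l)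
    (stat : ℕ → ℕ → Bool → ℕ → ℕ) (f : ℕ → ℕ → ℝ) (q : ℝ)
    (i : Fin l) (u : ℤ) (z : ℕ) (n : ℕ) : ℝ :=
  if u < 0 then 1
  else ∑' ω : Fin n → ℕ × ℕ × Bool,
    pathWeight f q n ω * (if ruined l c T stat n ω i u z then 1 else 0)

/-- `ψ_i(u, n)`: finite-time ruin probability without an up-front delayed by-claim. -/
def psi (l : ℕ) (c : Fin l → ℕ) (T : Fin l → ℕ → Fin l)
    (stat : ℕ → ℕ → Bool → ℕ → ℕ) (f : ℕ → ℕ → ℝ) (q : ℝ)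
    (i : Fin l) (u : ℤ) (n : ℕ) : ℝ :=
  psiAux l c T stat f q i u 0 n

/-- Adjustment statistic: aggregate reported claims `X + Y`. -/
def statRep (x y : ℕ) (_ : Bool) (_ : ℕ) : ℕ := x + y

/-- Adjustment statistic: aggregate settled claims `X + (1-D)·Y + carry`. -/
def statSet (x y : ℕ) (d : Bool) (carry : ℕ) : ℕ := x + (if d then 0 else y) + carry

/-- Adjustment statistic: reported number of claims `1{X>0} + 1{Y>0}`. -/
def statRepN (x y : ℕ) (_ : Bool) (_ : ℕ) : ℕ :=
  (if 0 < x then 1 else 0) + (if 0 < y then 1 else 0)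

/-- Adjustment statistic: settled number of claims
`1{X>0} + 1{Y>0 and not delayed} + 1{delayed by-claim from the previous period}`. -/
def statSetN (x y : ℕ) (d : Bool) (carry : ℕ) : ℕ :=
  (if 0 < x then 1 else 0) + (if 0 < y ∧ d = false then 1 else 0) +
    (if 0 < carry then 1 else 0)


set_option maxHeartbeats 1000000

section Lemmas
variable {f : ℕ → ℕ → ℝ} {q : ℝ}

lemma summable_f (hfnn : ∀ x y, 0 ≤ f x y) (hfsum : ∑' p : ℕ × ℕ, f p.1 p.2 = 1) :
    Summable (fun p : ℕ × ℕ => f p.1 p.2) := by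
  by_contra h
  rw [tsum_eq_zero_of_not_summable h] at hfsum
  norm_num at hfsum

lemma summable_fiber (hf : Summable (fun p : ℕ × ℕ => f p.1 p.2)) (x : ℕ) :
    Summable (fun y => f x y) := by
  have := hf.comp_injective (i := fun y => ((x, y) : ℕ × ℕ))
    (fun a b h => by simpa using h)
  exact this

lemma summable_marginal (hfnn : ∀ x y, 0 ≤ f x y)
    (hf : Summable (fun p : ℕ × ℕ => f p.1 p.2)) :
    Summable (fun x => fX f x) := by
  have := (summable_prod_of_nonneg (f := fun p : ℕ × ℕ => f p.1 p.2)
    (fun p => hfnn p.1 p.2)).1 hf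
  exact this.2

lemma w_nonneg (hfnn : ∀ x y, 0 ≤ f x y) (hq0 : 0 ≤ q) (hq1 : q ≤ 1)
    (a : ℕ × ℕ × Bool) : 0 ≤ w f q a := by
  unfold w
  have : (0:ℝ) ≤ (if a.2.2 then q else 1 - q) := by
    split <;> linarith
  exact mul_nonneg (hfnn _ _) this

lemma summable_w (hfnn : ∀ x y, 0 ≤ f x y) (hq0 : 0 ≤ q) (hq1 : q ≤ 1)
    (hf : Summable (fun p : ℕ × ℕ => f p.1 p.2)) :
    Summable (w f q) := by
  have key : Summable (fun p : (ℕ × ℕ) × Bool => f p.1.1 p.1.2 * (if p.2 then q else 1 - q)) :=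
    Summable.mul_of_nonneg (f := fun p : ℕ × ℕ => f p.1 p.2)
      (g := fun b : Bool => if b then q else 1 - q) hf Summable.of_finite
      (fun p => hfnn p.1 p.2) (fun b => by dsimp; split <;> linarith)
  have h2 : Summable ((w f q) ∘ (Equiv.prodAssoc ℕ ℕ Bool)) := by
    have : (w f q) ∘ (Equiv.prodAssoc ℕ ℕ Bool) =
        fun p : (ℕ × ℕ) × Bool => f p.1.1 p.1.2 * (if p.2 then q else 1 - q) := by
      funext p; rcases p with ⟨⟨x, y⟩, b⟩; rfl
    rw [this]; exact key
  exact (Equiv.prodAssoc ℕ ℕ Bool).summable_iff.mp h2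

lemma tsum_w (hfnn : ∀ x y, 0 ≤ f x y) (hq0 : 0 ≤ q) (hq1 : q ≤ 1)
    (hf : Summable (fun p : ℕ × ℕ => f p.1 p.2))
    (hfsum : ∑' p : ℕ × ℕ, f p.1 p.2 = 1) :
    ∑' a : ℕ × ℕ × Bool, w f q a = 1 := by
  rw [← (Equiv.prodAssoc ℕ ℕ Bool).tsum_eq (w f q)]
  have hs : Summable (fun p : (ℕ × ℕ) × Bool => w f q (Equiv.prodAssoc ℕ ℕ Bool p)) := by
    have := (Equiv.prodAssoc ℕ ℕ Bool).summable_iff.mpr (summable_w hfnn hq0 hq1 hf)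
    exact this
  rw [Summable.tsum_prod' hs (fun b => Summable.of_finite)]
  have : ∀ p : ℕ × ℕ, ∑' (b : Bool), w f q (Equiv.prodAssoc ℕ ℕ Bool (p, b)) = f p.1 p.2 := by
    intro p
    rw [tsum_bool]
    show f p.1 p.2 * (1 - q) + f p.1 p.2 * q = f p.1 p.2
    ring
  calc ∑' (p : ℕ × ℕ) (b : Bool), w f q (Equiv.prodAssoc ℕ ℕ Bool (p, b))
      = ∑' (p : ℕ × ℕ), f p.1 p.2 := by exact tsum_congr this
    _ = 1 := hfsum

end Lemmas

section PathW
variable {f : ℕ → ℕ → ℝ} {q : ℝ}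

lemma pathWeight_nonneg (hfnn : ∀ x y, 0 ≤ f x y) (hq0 : 0 ≤ q) (hq1 : q ≤ 1)
    (n : ℕ) (ω : Fin n → ℕ × ℕ × Bool) : 0 ≤ pathWeight f q n ω :=
  Finset.prod_nonneg (fun s _ => w_nonneg hfnn hq0 hq1 _)

lemma pathWeight_cons (n : ℕ) (a : ℕ × ℕ × Bool) (ω : Fin n → ℕ × ℕ × Bool) :
    pathWeight f q (n + 1) (Fin.cons a ω) = w f q a * pathWeight f q n ω := by
  unfold pathWeight
  have : (fun s : Fin (n+1) => w f q (Fin.cons (α := fun _ => ℕ × ℕ × Bool) a ω s)) =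
      Fin.cons (α := fun _ => ℝ) (w f q a) (fun s => w f q (ω s)) := by
    funext s
    induction s using Fin.cases <;> simp
  rw [this]
  exact Fin.prod_cons (w f q a) (fun s => w f q (ω s))

lemma pathWeight_consEquiv (n : ℕ) (p : (ℕ × ℕ × Bool) × (Fin n → ℕ × ℕ × Bool)) :
    pathWeight f q (n + 1) ((Fin.consEquiv (fun _ => ℕ × ℕ × Bool)) p) =
      w f q p.1 * pathWeight f q n p.2 :=
  pathWeight_cons n p.1 p.2

lemma summable_pathWeight (hfnn : ∀ x y, 0 ≤ f x y) (hq0 : 0 ≤ q) (hq1 : q ≤ 1)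
    (hf : Summable (fun p : ℕ × ℕ => f p.1 p.2)) :
    ∀ n, Summable (pathWeight f q n)
  | 0 => by
    haveI : Unique (Fin 0 → ℕ × ℕ × Bool) := Pi.uniqueOfIsEmpty _
    haveI : Finite (Fin 0 → ℕ × ℕ × Bool) := Finite.of_subsingleton
    exact Summable.of_finite
  | (n + 1) => by
    have key : Summable (fun p : (ℕ × ℕ × Bool) × (Fin n → ℕ × ℕ × Bool) =>
        w f q p.1 * pathWeight f q n p.2) :=
      Summable.mul_of_nonneg (f := w f q) (g := pathWeight f q n)
        (summable_w hfnn hq0 hq1 hf) (summable_pathWeight hfnn hq0 hq1 hf n)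
        (w_nonneg hfnn hq0 hq1) (pathWeight_nonneg hfnn hq0 hq1 n)
    have h2 : Summable ((pathWeight f q (n+1)) ∘ (Fin.consEquiv (fun _ => ℕ × ℕ × Bool))) := by
      have : (pathWeight f q (n+1)) ∘ (Fin.consEquiv (fun _ => ℕ × ℕ × Bool)) =
          fun p : (ℕ × ℕ × Bool) × (Fin n → ℕ × ℕ × Bool) =>
            w f q p.1 * pathWeight f q n p.2 := by
        funext p; exact pathWeight_consEquiv n p
      rw [this]; exact key
    exact (Fin.consEquiv (fun _ => ℕ × ℕ × Bool)).summable_iff.mp h2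

lemma tsum_pathWeight (hfnn : ∀ x y, 0 ≤ f x y) (hq0 : 0 ≤ q) (hq1 : q ≤ 1)
    (hf : Summable (fun p : ℕ × ℕ => f p.1 p.2))
    (hfsum : ∑' p : ℕ × ℕ, f p.1 p.2 = 1) :
    ∀ n, ∑' ω : Fin n → ℕ × ℕ × Bool, pathWeight f q n ω = 1
  | 0 => by
    haveI : Unique (Fin 0 → ℕ × ℕ × Bool) := Pi.uniqueOfIsEmpty _
    calc ∑' ω : Fin 0 → ℕ × ℕ × Bool, pathWeight f q 0 ω
        = pathWeight f q 0 default :=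
          tsum_eq_single _ (fun b hb => absurd (Subsingleton.elim b default) hb)
      _ = 1 := by simp [pathWeight]
  | (n + 1) => by
    rw [← Equiv.tsum_eq (Fin.consEquiv (fun _ => ℕ × ℕ × Bool)) (pathWeight f q (n+1))]
    have key : Summable (fun p : (ℕ × ℕ × Bool) × (Fin n → ℕ × ℕ × Bool) =>
        w f q p.1 * pathWeight f q n p.2) :=
      Summable.mul_of_nonneg (f := w f q) (g := pathWeight f q n)
        (summable_w hfnn hq0 hq1 hf) (summable_pathWeight hfnn hq0 hq1 hf n)
        (w_nonneg hfnn hq0 hq1) (pathWeight_nonneg hfnn hq0 hq1 n)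
    calc ∑' p : (ℕ × ℕ × Bool) × (Fin n → ℕ × ℕ × Bool),
          pathWeight f q (n+1) ((Fin.consEquiv (fun _ => ℕ × ℕ × Bool)) p)
        = ∑' p : (ℕ × ℕ × Bool) × (Fin n → ℕ × ℕ × Bool),
            w f q p.1 * pathWeight f q n p.2 := tsum_congr (pathWeight_consEquiv n)
      _ = ∑' (a : ℕ × ℕ × Bool) (ω : Fin n → ℕ × ℕ × Bool),
            w f q a * pathWeight f q n ω :=
          Summable.tsum_prod' key (fun a => (summable_pathWeight hfnn hq0 hq1 hf n).mul_left (w f q a))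
      _ = ∑' (a : ℕ × ℕ × Bool), w f q a * 1 := by
          refine tsum_congr (fun a => ?_)
          rw [tsum_mul_left, tsum_pathWeight hfnn hq0 hq1 hf hfsum n]
      _ = 1 := by
          simp only [mul_one]
          exact tsum_w hfnn hq0 hq1 hf hfsum

end PathW

section Psi
variable {l : ℕ} {c : Fin l → ℕ} {T : Fin l → ℕ → Fin l} {stat : ℕ → ℕ → Bool → ℕ → ℕ}
variable {f : ℕ → ℕ → ℝ} {q : ℝ}

lemma ind_nonneg (b : Bool) : (0:ℝ) ≤ (if b then (1:ℝ) else 0) := by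
  cases b <;> norm_num

lemma mul_ind_le (b : Bool) {r : ℝ} (hr : 0 ≤ r) : r * (if b then (1:ℝ) else 0) ≤ r := by
  cases b <;> simp [hr]

lemma integrand_nonneg (hfnn : ∀ x y, 0 ≤ f x y) (hq0 : 0 ≤ q) (hq1 : q ≤ 1)
    (n : ℕ) (i : Fin l) (u : ℤ) (z : ℕ) (ω : Fin n → ℕ × ℕ × Bool) :
    0 ≤ pathWeight f q n ω * (if ruined l c T stat n ω i u z then (1:ℝ) else 0) :=
  mul_nonneg (pathWeight_nonneg hfnn hq0 hq1 n ω) (ind_nonneg _)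

lemma integrand_le (hfnn : ∀ x y, 0 ≤ f x y) (hq0 : 0 ≤ q) (hq1 : q ≤ 1)
    (n : ℕ) (i : Fin l) (u : ℤ) (z : ℕ) (ω : Fin n → ℕ × ℕ × Bool) :
    pathWeight f q n ω * (if ruined l c T stat n ω i u z then (1:ℝ) else 0) ≤
      pathWeight f q n ω := by
  exact mul_ind_le _ (pathWeight_nonneg hfnn hq0 hq1 n ω)

lemma summable_integrand (hfnn : ∀ x y, 0 ≤ f x y) (hq0 : 0 ≤ q) (hq1 : q ≤ 1)
    (hf : Summable (fun p : ℕ × ℕ => f p.1 p.2))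
    (n : ℕ) (i : Fin l) (u : ℤ) (z : ℕ) :
    Summable (fun ω : Fin n → ℕ × ℕ × Bool =>
      pathWeight f q n ω * (if ruined l c T stat n ω i u z then (1:ℝ) else 0)) :=
  Summable.of_nonneg_of_le (integrand_nonneg hfnn hq0 hq1 n i u z)
    (integrand_le hfnn hq0 hq1 n i u z) (summable_pathWeight hfnn hq0 hq1 hf n)

lemma psiAux_nonneg (hfnn : ∀ x y, 0 ≤ f x y) (hq0 : 0 ≤ q) (hq1 : q ≤ 1)
    (i : Fin l) (u : ℤ) (z : ℕ) (n : ℕ) :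
    0 ≤ psiAux l c T stat f q i u z n := by
  unfold psiAux; split
  · norm_num
  · exact tsum_nonneg (integrand_nonneg hfnn hq0 hq1 n i u z)

lemma psiAux_le_one (hfnn : ∀ x y, 0 ≤ f x y) (hq0 : 0 ≤ q) (hq1 : q ≤ 1)
    (hf : Summable (fun p : ℕ × ℕ => f p.1 p.2))
    (hfsum : ∑' p : ℕ × ℕ, f p.1 p.2 = 1)
    (i : Fin l) (u : ℤ) (z : ℕ) (n : ℕ) :
    psiAux l c T stat f q i u z n ≤ 1 := by
  unfold psiAux; split
  · exact le_refl 1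
  · calc ∑' ω : Fin n → ℕ × ℕ × Bool,
          pathWeight f q n ω * (if ruined l c T stat n ω i u z then (1:ℝ) else 0)
        ≤ ∑' ω : Fin n → ℕ × ℕ × Bool, pathWeight f q n ω :=
          Summable.tsum_le_tsum (integrand_le hfnn hq0 hq1 n i u z)
            (summable_integrand hfnn hq0 hq1 hf n i u z)
            (summable_pathWeight hfnn hq0 hq1 hf n)
      _ = 1 := tsum_pathWeight hfnn hq0 hq1 hf hfsum n

lemma ruined_cons (n : ℕ) (a : ℕ × ℕ × Bool) (ω : Fin n → ℕ × ℕ × Bool)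
    (i : Fin l) (u : ℤ) (z : ℕ) :
    ruined l c T stat (n + 1) (Fin.cons a ω) i u z =
      (if u + (c i : ℤ) - ((a.1 : ℤ) + (if a.2.2 then 0 else (a.2.1 : ℤ)) + (z : ℤ)) < 0
        then true
        else ruined l c T stat n ω (T i (stat a.1 a.2.1 a.2.2 z))
          (u + (c i : ℤ) - ((a.1 : ℤ) + (if a.2.2 then 0 else (a.2.1 : ℤ)) + (z : ℤ)))
          (if a.2.2 then a.2.1 else 0)) := by
  show (if _ < 0 then true else _) = _
  simp only [Fin.cons_zero, Fin.cons_succ]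

/-- One-step conditioning on the first-period outcome. -/
lemma psiAux_step (hfnn : ∀ x y, 0 ≤ f x y) (hq0 : 0 ≤ q) (hq1 : q ≤ 1)
    (hf : Summable (fun p : ℕ × ℕ => f p.1 p.2))
    (hfsum : ∑' p : ℕ × ℕ, f p.1 p.2 = 1)
    (i : Fin l) (u : ℤ) (hu : 0 ≤ u) (z : ℕ) (n : ℕ) :
    psiAux l c T stat f q i u z (n + 1) =
      ∑' a : ℕ × ℕ × Bool, w f q a *
        psiAux l c T stat f q (T i (stat a.1 a.2.1 a.2.2 z))
          (u + (c i : ℤ) - ((a.1 : ℤ) + (if a.2.2 then 0 else (a.2.1 : ℤ)) + (z : ℤ)))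
          (if a.2.2 then a.2.1 else 0) n := by
  have hu' : ¬ (u < 0) := not_lt.2 hu
  have key : Summable (fun p : (ℕ × ℕ × Bool) × (Fin n → ℕ × ℕ × Bool) =>
      w f q p.1 * pathWeight f q n p.2) :=
    Summable.mul_of_nonneg (f := w f q) (g := pathWeight f q n)
      (summable_w hfnn hq0 hq1 hf) (summable_pathWeight hfnn hq0 hq1 hf n)
      (w_nonneg hfnn hq0 hq1) (pathWeight_nonneg hfnn hq0 hq1 n)
  set G : (ℕ × ℕ × Bool) × (Fin n → ℕ × ℕ × Bool) → ℝ := fun p =>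
    w f q p.1 * (pathWeight f q n p.2 *
      (if (if u + (c i : ℤ) - ((p.1.1 : ℤ) + (if p.1.2.2 then 0 else (p.1.2.1 : ℤ)) + (z : ℤ)) < 0
            then true
            else ruined l c T stat n p.2 (T i (stat p.1.1 p.1.2.1 p.1.2.2 z))
              (u + (c i : ℤ) - ((p.1.1 : ℤ) + (if p.1.2.2 then 0 else (p.1.2.1 : ℤ)) + (z : ℤ)))
              (if p.1.2.2 then p.1.2.1 else 0))
        then (1:ℝ) else 0)) with hG
  have hGsum : Summable G := by
    refine Summable.of_nonneg_of_le (fun p => ?_) (fun p => ?_) key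
    · exact mul_nonneg (w_nonneg hfnn hq0 hq1 _)
        (mul_nonneg (pathWeight_nonneg hfnn hq0 hq1 n _) (ind_nonneg _))
    · exact mul_le_mul_of_nonneg_left
        (mul_ind_le _ (pathWeight_nonneg hfnn hq0 hq1 n p.2)) (w_nonneg hfnn hq0 hq1 p.1)
  calc psiAux l c T stat f q i u z (n + 1)
      = ∑' ω : Fin (n+1) → ℕ × ℕ × Bool, pathWeight f q (n+1) ω *
          (if ruined l c T stat (n+1) ω i u z then (1:ℝ) else 0) := if_neg hu'
    _ = ∑' p : (ℕ × ℕ × Bool) × (Fin n → ℕ × ℕ × Bool),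
          pathWeight f q (n+1) ((Fin.consEquiv (fun _ => ℕ × ℕ × Bool)) p) *
          (if ruined l c T stat (n+1) ((Fin.consEquiv (fun _ => ℕ × ℕ × Bool)) p) i u z
            then (1:ℝ) else 0) :=
        (Equiv.tsum_eq (Fin.consEquiv (fun _ => ℕ × ℕ × Bool)) _).symm
    _ = ∑' p : (ℕ × ℕ × Bool) × (Fin n → ℕ × ℕ × Bool), G p := by
        refine tsum_congr (fun p => ?_)
        have e1 : (Fin.consEquiv (fun _ => ℕ × ℕ × Bool)) p = Fin.cons p.1 p.2 := rfl
        rw [e1, pathWeight_cons n p.1 p.2, ruined_cons n p.1 p.2 i u z, hG, mul_assoc]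
    _ = ∑' (a : ℕ × ℕ × Bool) (ω : Fin n → ℕ × ℕ × Bool), G (a, ω) := by
        refine Summable.tsum_prod' hGsum (fun a => ?_)
        refine Summable.of_nonneg_of_le (fun ω => ?_) (fun ω => ?_)
          (((summable_pathWeight hfnn hq0 hq1 hf n).mul_left (w f q a)))
        · exact mul_nonneg (w_nonneg hfnn hq0 hq1 _)
            (mul_nonneg (pathWeight_nonneg hfnn hq0 hq1 n _) (ind_nonneg _))
        · exact mul_le_mul_of_nonneg_left
            (mul_ind_le _ (pathWeight_nonneg hfnn hq0 hq1 n ω)) (w_nonneg hfnn hq0 hq1 a)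
    _ = ∑' a : ℕ × ℕ × Bool, w f q a *
          psiAux l c T stat f q (T i (stat a.1 a.2.1 a.2.2 z))
            (u + (c i : ℤ) - ((a.1 : ℤ) + (if a.2.2 then 0 else (a.2.1 : ℤ)) + (z : ℤ)))
            (if a.2.2 then a.2.1 else 0) n := by
        refine tsum_congr (fun a => ?_)
        by_cases h : u + (c i : ℤ) - ((a.1 : ℤ) + (if a.2.2 then 0 else (a.2.1 : ℤ)) + (z : ℤ)) < 0
        · have : psiAux l c T stat f q (T i (stat a.1 a.2.1 a.2.2 z))
              (u + (c i : ℤ) - ((a.1 : ℤ) + (if a.2.2 then 0 else (a.2.1 : ℤ)) + (z : ℤ)))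
              (if a.2.2 then a.2.1 else 0) n = 1 := if_pos h
          rw [this, hG]
          simp only [if_pos h, if_true, mul_one]
          rw [tsum_mul_left, tsum_pathWeight hfnn hq0 hq1 hf hfsum n, mul_one]
        · have : psiAux l c T stat f q (T i (stat a.1 a.2.1 a.2.2 z))
              (u + (c i : ℤ) - ((a.1 : ℤ) + (if a.2.2 then 0 else (a.2.1 : ℤ)) + (z : ℤ)))
              (if a.2.2 then a.2.1 else 0) n =
              ∑' ω : Fin n → ℕ × ℕ × Bool, pathWeight f q n ω *
                (if ruined l c T stat n ω (T i (stat a.1 a.2.1 a.2.2 z))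
                    (u + (c i : ℤ) - ((a.1 : ℤ) + (if a.2.2 then 0 else (a.2.1 : ℤ)) + (z : ℤ)))
                    (if a.2.2 then a.2.1 else 0) then (1:ℝ) else 0) := if_neg h
          rw [this, hG]
          simp only [if_neg h]
          rw [tsum_mul_left]

end Psi

section Shift
variable {l : ℕ} {c : Fin l → ℕ} {T : Fin l → ℕ → Fin l} {stat : ℕ → ℕ → Bool → ℕ → ℕ}
variable {f : ℕ → ℕ → ℝ} {q : ℝ}

lemma psiAux_zero (i : Fin l) (u : ℤ) (hu : 0 ≤ u) (z : ℕ) :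
    psiAux l c T stat f q i u z 0 = 0 := by
  rw [psiAux, if_neg (not_lt.2 hu)]
  simp [ruined]

/-- Ruin is certain if the pending delayed claim exceeds the premium plus surplus. -/
lemma psiAux_one_of_big (hfnn : ∀ x y, 0 ≤ f x y) (hq0 : 0 ≤ q) (hq1 : q ≤ 1)
    (hf : Summable (fun p : ℕ × ℕ => f p.1 p.2))
    (hfsum : ∑' p : ℕ × ℕ, f p.1 p.2 = 1)
    (j : Fin l) (y : ℕ) (hy : c j < y) (n : ℕ) :
    psiAux l c T stat f q j 0 y (n + 1) = 1 := by
  rw [psiAux_step hfnn hq0 hq1 hf hfsum j 0 (le_refl 0) y n]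
  have : ∀ a : ℕ × ℕ × Bool,
      psiAux l c T stat f q (T j (stat a.1 a.2.1 a.2.2 y))
        (0 + (c j : ℤ) - ((a.1 : ℤ) + (if a.2.2 then 0 else (a.2.1 : ℤ)) + (y : ℤ)))
        (if a.2.2 then a.2.1 else 0) n = 1 := by
    intro a
    have he : (0:ℤ) ≤ (if a.2.2 then 0 else (a.2.1 : ℤ)) := by split <;> positivity
    have : (0:ℤ) + (c j : ℤ) - ((a.1 : ℤ) + (if a.2.2 then 0 else (a.2.1 : ℤ)) + (y : ℤ)) < 0 := by
      have h1 : ((c j : ℤ)) < (y : ℤ) := by exact_mod_cast hy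
      have h2 : (0:ℤ) ≤ (a.1 : ℤ) := by positivity
      linarith
    exact if_pos this
  calc ∑' a : ℕ × ℕ × Bool, w f q a *
        psiAux l c T stat f q (T j (stat a.1 a.2.1 a.2.2 y))
          (0 + (c j : ℤ) - ((a.1 : ℤ) + (if a.2.2 then 0 else (a.2.1 : ℤ)) + (y : ℤ)))
          (if a.2.2 then a.2.1 else 0) n
      = ∑' a : ℕ × ℕ × Bool, w f q a := tsum_congr (fun a => by rw [this a, mul_one])
    _ = 1 := tsum_w hfnn hq0 hq1 hf hfsum

/-- For the reported-number statistic the ruin probability only depends on `u - z`. -/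
lemma psiAux_shift (hfnn : ∀ x y, 0 ≤ f x y) (hq0 : 0 ≤ q) (hq1 : q ≤ 1)
    (hf : Summable (fun p : ℕ × ℕ => f p.1 p.2))
    (hfsum : ∑' p : ℕ × ℕ, f p.1 p.2 = 1)
    (j : Fin l) (u u' : ℤ) (hu : 0 ≤ u) (hu' : 0 ≤ u') (z z' : ℕ)
    (hzz : u - (z : ℤ) = u' - (z' : ℤ)) (n : ℕ) :
    psiAux l c T statRepN f q j u z n = psiAux l c T statRepN f q j u' z' n := by
  cases n with
  | zero => rw [psiAux_zero j u hu z, psiAux_zero j u' hu' z']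
  | succ n =>
    rw [psiAux_step hfnn hq0 hq1 hf hfsum j u hu z n,
      psiAux_step hfnn hq0 hq1 hf hfsum j u' hu' z' n]
    refine tsum_congr (fun a => ?_)
    have harg : u + (c j : ℤ) - ((a.1 : ℤ) + (if a.2.2 then 0 else (a.2.1 : ℤ)) + (z : ℤ)) =
        u' + (c j : ℤ) - ((a.1 : ℤ) + (if a.2.2 then 0 else (a.2.1 : ℤ)) + (z' : ℤ)) := by
      linarith [hzz]
    have hstat : statRepN a.1 a.2.1 a.2.2 z = statRepN a.1 a.2.1 a.2.2 z' := rfl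
    rw [harg, hstat]

end Shift

section Regions
variable {f : ℕ → ℕ → ℝ} {q : ℝ}

lemma tsum_triple (F : ℕ × ℕ × Bool → ℝ) (hF : Summable F) :
    ∑' a : ℕ × ℕ × Bool, F a =
      ∑' p : ℕ × ℕ, (F (p.1, p.2, false) + F (p.1, p.2, true)) := by
  rw [← Equiv.tsum_eq (Equiv.prodAssoc ℕ ℕ Bool) F]
  have hs : Summable (fun p : (ℕ × ℕ) × Bool => F (Equiv.prodAssoc ℕ ℕ Bool p)) :=
    (Equiv.prodAssoc ℕ ℕ Bool).summable_iff.mpr hF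
  rw [Summable.tsum_prod' hs (fun b => Summable.of_finite)]
  exact tsum_congr (fun p => tsum_bool _)

lemma fX_nonneg (hfnn : ∀ x y, 0 ≤ f x y) (x : ℕ) : 0 ≤ fX f x :=
  tsum_nonneg (fun y => hfnn x y)

lemma tsum_R1 (hfnn : ∀ x y, 0 ≤ f x y) (hfdeg : ∀ y : ℕ, 0 < y → f 0 y = 0) (C : ℝ) :
    ∑' p : ℕ × ℕ, (if p.1 = 0 then f p.1 p.2 * C else 0) = f 0 0 * C := by
  rw [tsum_eq_single ((0, 0) : ℕ × ℕ)]
  · simp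
  · rintro ⟨x, y⟩ hp
    by_cases hx : x = 0
    · subst hx
      have hy : 0 < y := by
        rcases Nat.eq_zero_or_pos y with h | h
        · exact absurd (by simp [h]) hp
        · exact h
      simp [hfdeg y hy]
    · simp [hx]

lemma tsum_R2 (m : ℕ) (C : ℕ → ℝ) :
    ∑' p : ℕ × ℕ, (if 1 ≤ p.1 ∧ p.1 ≤ m ∧ p.2 = 0 then f p.1 p.2 * C p.1 else 0) =
      ∑ x ∈ Finset.Icc 1 m, f x 0 * C x := by
  rw [tsum_eq_sum (s := Finset.Icc 1 m ×ˢ ({0} : Finset ℕ)) ?h]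
  case h =>
    rintro ⟨x, y⟩ hp
    rw [if_neg]
    rintro ⟨h1, h2, h3⟩
    exact hp (by simp only [Finset.mem_product, Finset.mem_Icc, Finset.mem_singleton]; omega)
  rw [Finset.sum_product]
  refine Finset.sum_congr rfl (fun x hx => ?_)
  rw [Finset.sum_singleton, if_pos]
  simp only [Finset.mem_Icc] at hx
  exact ⟨hx.1, hx.2, rfl⟩

lemma tsum_R3 (m : ℕ) (C : ℕ → ℕ → ℝ) :
    ∑' p : ℕ × ℕ,
        (if 1 ≤ p.1 ∧ 1 ≤ p.2 ∧ p.1 + p.2 ≤ m then f p.1 p.2 * C p.1 p.2 else 0) =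
      ∑ x ∈ Finset.Icc 1 (m - 1), ∑ y ∈ Finset.Icc 1 (m - x), f x y * C x y := by
  rw [tsum_eq_sum (s := Finset.Icc 1 m ×ˢ Finset.Icc 1 m) ?h]
  case h =>
    rintro ⟨x, y⟩ hp
    rw [if_neg]
    rintro ⟨h1, h2, h3⟩
    exact hp (by simp only [Finset.mem_product, Finset.mem_Icc, Finset.mem_singleton]; omega)
  rw [Finset.sum_product]
  rw [← Finset.sum_subset (Finset.Icc_subset_Icc le_rfl (by omega : m - 1 ≤ m))]
  · refine Finset.sum_congr rfl (fun x hx => ?_)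
    simp only [Finset.mem_Icc] at hx
    rw [← Finset.sum_subset (Finset.Icc_subset_Icc le_rfl (by omega : m - x ≤ m))]
    · refine Finset.sum_congr rfl (fun y hy => ?_)
      simp only [Finset.mem_Icc] at hy
      rw [if_pos ⟨hx.1, hy.1, by omega⟩]
    · intro y hy hy'
      simp only [Finset.mem_Icc] at hy hy'
      rw [if_neg]
      rintro ⟨h1, h2, h3⟩
      omega
  · intro x hx hx'
    simp only [Finset.mem_Icc] at hx hx'
    refine Finset.sum_eq_zero (fun y hy => ?_)
    simp only [Finset.mem_Icc] at hy
    rw [if_neg]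
    rintro ⟨h1, h2, h3⟩
    omega

end Regions

section Regions2
variable {f : ℕ → ℕ → ℝ} {q : ℝ}

lemma summable_shift (hf : Summable (fun p : ℕ × ℕ => f p.1 p.2)) (x j : ℕ) :
    Summable (fun k : ℕ => f x (k + j)) :=
  (summable_fiber hf x).comp_injective (add_left_injective j)

lemma tsum_R4 (hfnn : ∀ x y, 0 ≤ f x y)
    (hf : Summable (fun p : ℕ × ℕ => f p.1 p.2))
    (m : ℕ) (r : ℝ) (hr0 : 0 ≤ r) (hr1 : r ≤ 1) (C : ℕ → ℝ)
    (hC0 : ∀ k, 0 ≤ C k) (hC1 : ∀ k, C k ≤ 1) :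
    ∑' p : ℕ × ℕ,
        (if 1 ≤ p.1 ∧ p.1 ≤ m ∧ m + 1 ≤ p.1 + p.2
          then r * (f p.1 p.2 * C (p.2 - (m - p.1))) else 0) =
      r * ∑' k : ℕ, C (k + 1) * xi f (k + 1) m := by
  set F : ℕ × ℕ → ℝ := fun p =>
    if 1 ≤ p.1 ∧ p.1 ≤ m ∧ m + 1 ≤ p.1 + p.2
      then r * (f p.1 p.2 * C (p.2 - (m - p.1))) else 0 with hF
  have hFnn : ∀ p, 0 ≤ F p := by
    intro p; rw [hF]; dsimp only
    split
    · exact mul_nonneg hr0 (mul_nonneg (hfnn _ _) (hC0 _))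
    · exact le_refl 0
  have hFle : ∀ p, F p ≤ f p.1 p.2 := by
    intro p; rw [hF]; dsimp only
    split
    · calc r * (f p.1 p.2 * C (p.2 - (m - p.1)))
          ≤ 1 * (f p.1 p.2 * 1) := by
            refine mul_le_mul hr1 ?_ (mul_nonneg (hfnn _ _) (hC0 _)) zero_le_one
            exact mul_le_mul_of_nonneg_left (hC1 _) (hfnn _ _)
        _ = f p.1 p.2 := by ring
    · exact hfnn _ _
  have hFsum : Summable F := Summable.of_nonneg_of_le hFnn hFle hf
  have hFfib : ∀ x, Summable (fun y => F (x, y)) := by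
    intro x
    refine Summable.of_nonneg_of_le (fun y => hFnn (x, y)) (fun y => hFle (x, y))
      (summable_fiber hf x)
  have hCf : ∀ x, x ≤ m → Summable (fun k : ℕ => C (k + 1) * f x (k + 1 + m - x)) := by
    intro x hxm
    have h1 : Summable (fun k : ℕ => f x (k + 1 + m - x)) := by
      have := summable_shift hf x (m + 1 - x)
      have he : (fun k : ℕ => f x (k + 1 + m - x)) = (fun k : ℕ => f x (k + (m + 1 - x))) := by
        funext k; congr 1; omega
      rw [he]; exact this
    refine Summable.of_nonneg_of_le (fun k => mul_nonneg (hC0 _) (hfnn _ _))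
      (fun k => ?_) h1
    have := mul_le_mul_of_nonneg_right (hC1 (k + 1)) (hfnn x (k + 1 + m - x))
    simpa using this
  have inner : ∀ x : ℕ, ∑' y : ℕ, F (x, y) =
      if 1 ≤ x ∧ x ≤ m then r * ∑' k : ℕ, C (k + 1) * f x (k + 1 + m - x) else 0 := by
    intro x
    by_cases hx : 1 ≤ x ∧ x ≤ m
    · rw [if_pos hx]
      have hsf := hFfib x
      have := Summable.sum_add_tsum_nat_add (f := fun y => F (x, y)) (m + 1 - x) hsf
      rw [← this]
      have hz : ∑ y ∈ Finset.range (m + 1 - x), F (x, y) = 0 := by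
        refine Finset.sum_eq_zero (fun y hy => ?_)
        simp only [Finset.mem_range] at hy
        rw [hF]; dsimp only
        rw [if_neg]; rintro ⟨h1, h2, h3⟩; omega
      rw [hz, zero_add]
      rw [← tsum_mul_left]
      refine tsum_congr (fun k => ?_)
      rw [hF]; dsimp only
      rw [if_pos ⟨hx.1, hx.2, by omega⟩]
      have e1 : k + (m + 1 - x) - (m - x) = k + 1 := by omega
      have e2 : k + 1 + m - x = k + (m + 1 - x) := by omega
      rw [e1, e2]; ring
    · rw [if_neg hx]
      have : ∀ y : ℕ, F (x, y) = 0 := by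
        intro y; rw [hF]; dsimp only; rw [if_neg]; rintro ⟨h1, h2, h3⟩; exact hx ⟨h1, h2⟩
      simp [this]
  calc ∑' p : ℕ × ℕ, F p
      = ∑' (x : ℕ) (y : ℕ), F (x, y) := Summable.tsum_prod' hFsum hFfib
    _ = ∑' x : ℕ, (if 1 ≤ x ∧ x ≤ m then r * ∑' k : ℕ, C (k + 1) * f x (k + 1 + m - x) else 0) :=
        tsum_congr inner
    _ = ∑ x ∈ Finset.Icc 1 m, (if 1 ≤ x ∧ x ≤ m
          then r * ∑' k : ℕ, C (k + 1) * f x (k + 1 + m - x) else 0) := by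
        refine tsum_eq_sum (fun x hx => ?_)
        simp only [Finset.mem_Icc] at hx
        rw [if_neg (fun h => hx ⟨h.1, h.2⟩)]
    _ = ∑ x ∈ Finset.Icc 1 m, r * ∑' k : ℕ, C (k + 1) * f x (k + 1 + m - x) := by
        refine Finset.sum_congr rfl (fun x hx => ?_)
        simp only [Finset.mem_Icc] at hx
        rw [if_pos hx]
    _ = r * ∑' k : ℕ, C (k + 1) * xi f (k + 1) m := by
        rw [← Finset.mul_sum]
        congr 1
        have : ∀ k : ℕ, C (k + 1) * xi f (k + 1) m =
            ∑ x ∈ Finset.Icc 1 m, C (k + 1) * f x (k + 1 + m - x) := by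
          intro k; rw [xi, Finset.mul_sum]
        rw [tsum_congr this, Summable.tsum_finsetSum (fun x hx => hCf x (by
          simp only [Finset.mem_Icc] at hx; exact hx.2))]

lemma tsum_R5 (hfnn : ∀ x y, 0 ≤ f x y)
    (hf : Summable (fun p : ℕ × ℕ => f p.1 p.2)) (m : ℕ) :
    ∑' p : ℕ × ℕ, (if m + 1 ≤ p.1 then f p.1 p.2 else 0) =
      ∑' k : ℕ, fX f (m + 1 + k) := by
  set F : ℕ × ℕ → ℝ := fun p => if m + 1 ≤ p.1 then f p.1 p.2 else 0 with hF
  have hFnn : ∀ p, 0 ≤ F p := by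
    intro p; rw [hF]; dsimp only; split
    · exact hfnn _ _
    · exact le_refl 0
  have hFle : ∀ p, F p ≤ f p.1 p.2 := by
    intro p; rw [hF]; dsimp only; split
    · exact le_refl _
    · exact hfnn _ _
  have hFsum : Summable F := Summable.of_nonneg_of_le hFnn hFle hf
  have hFfib : ∀ x, Summable (fun y => F (x, y)) := fun x =>
    Summable.of_nonneg_of_le (fun y => hFnn (x, y)) (fun y => hFle (x, y)) (summable_fiber hf x)
  have inner : ∀ x : ℕ, ∑' y : ℕ, F (x, y) = (if m + 1 ≤ x then fX f x else 0) := by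
    intro x
    by_cases hx : m + 1 ≤ x
    · rw [if_pos hx, fX]
      refine tsum_congr (fun y => ?_)
      rw [hF]; dsimp only; rw [if_pos hx]
    · rw [if_neg hx]
      have : ∀ y : ℕ, F (x, y) = 0 := by
        intro y; rw [hF]; dsimp only; rw [if_neg hx]
      simp [this]
  have houter : Summable (fun x : ℕ => if m + 1 ≤ x then fX f x else 0) := by
    refine Summable.of_nonneg_of_le (fun x => ?_) (fun x => ?_) (summable_marginal hfnn hf)
    · split
      · exact fX_nonneg hfnn _
      · exact le_refl 0
    · split
      · exact le_refl _
      · exact fX_nonneg hfnn _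
  calc ∑' p : ℕ × ℕ, F p
      = ∑' (x : ℕ) (y : ℕ), F (x, y) := Summable.tsum_prod' hFsum hFfib
    _ = ∑' x : ℕ, (if m + 1 ≤ x then fX f x else 0) := tsum_congr inner
    _ = ∑' k : ℕ, fX f (m + 1 + k) := by
        have := Summable.sum_add_tsum_nat_add (f := fun x => if m + 1 ≤ x then fX f x else 0) (m + 1) houter
        rw [← this]
        have hz : ∑ x ∈ Finset.range (m + 1), (if m + 1 ≤ x then fX f x else 0) = 0 := by
          refine Finset.sum_eq_zero (fun x hx => ?_)
          simp only [Finset.mem_range] at hx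
          rw [if_neg (by omega)]
        rw [hz, zero_add]
        refine tsum_congr (fun k => ?_)
        show (if m + 1 ≤ k + (m + 1) then fX f (k + (m + 1)) else 0) = fX f (m + 1 + k)
        rw [if_pos (by omega : m + 1 ≤ k + (m + 1))]
        congr 1; omega

end Regions2

section Main
variable {f : ℕ → ℕ → ℝ} {q : ℝ}

lemma main_formula (l : ℕ) (c : Fin l → ℕ) (T : Fin l → ℕ → Fin l)
    (f : ℕ → ℕ → ℝ) (hfnn : ∀ x y, 0 ≤ f x y)
    (hfsum : ∑' p : ℕ × ℕ, f p.1 p.2 = 1)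
    (hfdeg : ∀ y : ℕ, 0 < y → f 0 y = 0)
    (q : ℝ) (hq0 : 0 ≤ q) (hq1 : q ≤ 1)
    (i : Fin l) (z m : ℕ) (hm : c i = m + z) (n : ℕ) :
    psiAux l c T statRepN f q i 0 z (n + 1) =
      f 0 0 * psi l c T statRepN f q (T i 0) ((m : ℕ) : ℤ) n
      + (∑ x ∈ Finset.Icc 1 m, f x 0 * psi l c T statRepN f q (T i 1) ((m - x : ℕ) : ℤ) n)
      + (∑ x ∈ Finset.Icc 1 (m - 1), ∑ y ∈ Finset.Icc 1 (m - x),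
          f x y * psi l c T statRepN f q (T i 2) ((m - x - y : ℕ) : ℤ) n)
      + (1 - q) * (∑' k : ℕ, xi f (k + 1) m)
      + q * (∑' k : ℕ, psiAux l c T statRepN f q (T i 2) 0 (k + 1) n * xi f (k + 1) m)
      + (∑' k : ℕ, fX f (m + 1 + k)) := by
  have hf := summable_f hfnn hfsum
  rw [psiAux_step hfnn hq0 hq1 hf hfsum i 0 le_rfl z n]
  have hGsum : Summable (fun a : ℕ × ℕ × Bool => w f q a *
      psiAux l c T statRepN f q (T i (statRepN a.1 a.2.1 a.2.2 z))
        (0 + (c i : ℤ) - ((a.1 : ℤ) + (if a.2.2 then 0 else (a.2.1 : ℤ)) + (z : ℤ)))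
        (if a.2.2 then a.2.1 else 0) n) := by
    refine Summable.of_nonneg_of_le (fun a => ?_) (fun a => ?_)
      (summable_w hfnn hq0 hq1 hf)
    · exact mul_nonneg (w_nonneg hfnn hq0 hq1 a) (psiAux_nonneg hfnn hq0 hq1 _ _ _ _)
    · have h := mul_le_mul_of_nonneg_left
        (psiAux_le_one (l := l) (c := c) (T := T) (stat := statRepN) hfnn hq0 hq1 hf hfsum (T i (statRepN a.1 a.2.1 a.2.2 z))
          (0 + (c i : ℤ) - ((a.1 : ℤ) + (if a.2.2 then 0 else (a.2.1 : ℤ)) + (z : ℤ)))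
          (if a.2.2 then a.2.1 else 0) n) (w_nonneg hfnn hq0 hq1 a)
      simpa using h
  rw [tsum_triple _ hGsum]
  -- the six region functions
  set C1 : ℝ := psi l c T statRepN f q (T i 0) ((m : ℕ) : ℤ) n with hC1
  set C2 : ℕ → ℝ := fun x => psi l c T statRepN f q (T i 1) ((m - x : ℕ) : ℤ) n with hC2
  set C3 : ℕ → ℕ → ℝ := fun x y => psi l c T statRepN f q (T i 2) ((m - x - y : ℕ) : ℤ) n with hC3
  set C4 : ℕ → ℝ := fun k => psiAux l c T statRepN f q (T i 2) 0 k n with hC4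
  have hpt : ∀ p : ℕ × ℕ,
      (w f q (p.1, p.2, false) *
        psiAux l c T statRepN f q (T i (statRepN (p.1, p.2, (false:Bool)).1 (p.1, p.2, (false:Bool)).2.1 (p.1, p.2, (false:Bool)).2.2 z))
          (0 + (c i : ℤ) - (((p.1, p.2, (false:Bool)).1 : ℤ) + (if (p.1, p.2, (false:Bool)).2.2 then 0 else ((p.1, p.2, (false:Bool)).2.1 : ℤ)) + (z : ℤ)))
          (if (p.1, p.2, (false:Bool)).2.2 then (p.1, p.2, (false:Bool)).2.1 else 0) n +
       w f q (p.1, p.2, true) *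
        psiAux l c T statRepN f q (T i (statRepN (p.1, p.2, (true:Bool)).1 (p.1, p.2, (true:Bool)).2.1 (p.1, p.2, (true:Bool)).2.2 z))
          (0 + (c i : ℤ) - (((p.1, p.2, (true:Bool)).1 : ℤ) + (if (p.1, p.2, (true:Bool)).2.2 then 0 else ((p.1, p.2, (true:Bool)).2.1 : ℤ)) + (z : ℤ)))
          (if (p.1, p.2, (true:Bool)).2.2 then (p.1, p.2, (true:Bool)).2.1 else 0) n) =
      (if p.1 = 0 then f p.1 p.2 * C1 else 0)
      + (if 1 ≤ p.1 ∧ p.1 ≤ m ∧ p.2 = 0 then f p.1 p.2 * C2 p.1 else 0)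
      + (if 1 ≤ p.1 ∧ 1 ≤ p.2 ∧ p.1 + p.2 ≤ m then f p.1 p.2 * C3 p.1 p.2 else 0)
      + (if 1 ≤ p.1 ∧ p.1 ≤ m ∧ m + 1 ≤ p.1 + p.2 then (1 - q) * (f p.1 p.2 * (fun _ : ℕ => (1:ℝ)) (p.2 - (m - p.1))) else 0)
      + (if 1 ≤ p.1 ∧ p.1 ≤ m ∧ m + 1 ≤ p.1 + p.2 then q * (f p.1 p.2 * C4 (p.2 - (m - p.1))) else 0)
      + (if m + 1 ≤ p.1 then f p.1 p.2 else 0) := by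
    rintro ⟨x, y⟩
    dsimp only
    simp only [statRepN, Bool.false_eq_true, if_false, if_true]
    have hwf : w f q (x, y, false) = f x y * (1 - q) := rfl
    have hwt : w f q (x, y, true) = f x y * q := rfl
    rw [hwf, hwt]
    by_cases hx5 : m + 1 ≤ x
    · -- region 5 : x > m, certain ruin
      have h1 : psiAux l c T statRepN f q (T i ((if 0 < x then 1 else 0) + if 0 < y then 1 else 0))
          ((0:ℤ) + (c i : ℤ) - ((x:ℤ) + (y:ℤ) + (z:ℤ))) 0 n = 1 := if_pos (by omega)
      have h2 : psiAux l c T statRepN f q (T i ((if 0 < x then 1 else 0) + if 0 < y then 1 else 0))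
          ((0:ℤ) + (c i : ℤ) - ((x:ℤ) + 0 + (z:ℤ))) y n = 1 := if_pos (by omega)
      rw [h1, h2, if_neg (by omega : ¬ x = 0),
        if_neg (by omega : ¬ (1 ≤ x ∧ x ≤ m ∧ y = 0)),
        if_neg (by omega : ¬ (1 ≤ x ∧ 1 ≤ y ∧ x + y ≤ m)),
        if_neg (by omega : ¬ (1 ≤ x ∧ x ≤ m ∧ m + 1 ≤ x + y)),
        if_neg (by omega : ¬ (1 ≤ x ∧ x ≤ m ∧ m + 1 ≤ x + y)),
        if_pos hx5]
      ring
    · by_cases hx0 : x = 0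
      · by_cases hy0 : y = 0
        · -- region 1 : (0,0)
          have hs : (if 0 < x then 1 else 0) + (if 0 < y then 1 else 0) = 0 := by
            simp [hx0, hy0]
          rw [hs]
          have h1 : psiAux l c T statRepN f q (T i 0)
              ((0:ℤ) + (c i : ℤ) - ((x:ℤ) + (y:ℤ) + (z:ℤ))) 0 n = C1 := by
            rw [show (0:ℤ) + (c i : ℤ) - ((x:ℤ) + (y:ℤ) + (z:ℤ)) = ((m:ℕ):ℤ) by omega, hC1]
            rfl
          have h2 : psiAux l c T statRepN f q (T i 0)
              ((0:ℤ) + (c i : ℤ) - ((x:ℤ) + 0 + (z:ℤ))) y n = C1 := by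
            rw [hy0, show (0:ℤ) + (c i : ℤ) - ((x:ℤ) + 0 + (z:ℤ)) = ((m:ℕ):ℤ) by omega, hC1]
            rfl
          rw [h1, h2, if_pos hx0,
            if_neg (by omega : ¬ (1 ≤ x ∧ x ≤ m ∧ y = 0)),
            if_neg (by omega : ¬ (1 ≤ x ∧ 1 ≤ y ∧ x + y ≤ m)),
            if_neg (by omega : ¬ (1 ≤ x ∧ x ≤ m ∧ m + 1 ≤ x + y)),
            if_neg (by omega : ¬ (1 ≤ x ∧ x ≤ m ∧ m + 1 ≤ x + y)),
            if_neg (by omega : ¬ (m + 1 ≤ x))]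
          ring
        · -- x = 0, y ≥ 1 : zero probability
          have hf0 : f x y = 0 := by rw [hx0]; exact hfdeg y (by omega)
          rw [hf0, if_pos hx0,
            if_neg (by omega : ¬ (1 ≤ x ∧ x ≤ m ∧ y = 0)),
            if_neg (by omega : ¬ (1 ≤ x ∧ 1 ≤ y ∧ x + y ≤ m)),
            if_neg (by omega : ¬ (1 ≤ x ∧ x ≤ m ∧ m + 1 ≤ x + y)),
            if_neg (by omega : ¬ (1 ≤ x ∧ x ≤ m ∧ m + 1 ≤ x + y)),
            if_neg (by omega : ¬ (m + 1 ≤ x))]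
          ring
      · have hxpos : 0 < x := Nat.pos_of_ne_zero hx0
        by_cases hy0 : y = 0
        · -- region 2 : x ∈ [1,m], y = 0
          have hs : (if 0 < x then 1 else 0) + (if 0 < y then 1 else 0) = 1 := by
            simp [hxpos, hy0]
          rw [hs]
          have h1 : psiAux l c T statRepN f q (T i 1)
              ((0:ℤ) + (c i : ℤ) - ((x:ℤ) + (y:ℤ) + (z:ℤ))) 0 n = C2 x := by
            rw [hy0, show (0:ℤ) + (c i : ℤ) - ((x:ℤ) + ((0:ℕ):ℤ) + (z:ℤ)) = ((m - x : ℕ):ℤ) by omega,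
              hC2]
            rfl
          have h2 : psiAux l c T statRepN f q (T i 1)
              ((0:ℤ) + (c i : ℤ) - ((x:ℤ) + 0 + (z:ℤ))) y n = C2 x := by
            rw [hy0, show (0:ℤ) + (c i : ℤ) - ((x:ℤ) + 0 + (z:ℤ)) = ((m - x : ℕ):ℤ) by omega,
              hC2]
            rfl
          rw [h1, h2, if_neg (by omega : ¬ x = 0),
            if_pos (⟨hxpos, by omega, hy0⟩ : 1 ≤ x ∧ x ≤ m ∧ y = 0),
            if_neg (by omega : ¬ (1 ≤ x ∧ 1 ≤ y ∧ x + y ≤ m)),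
            if_neg (by omega : ¬ (1 ≤ x ∧ x ≤ m ∧ m + 1 ≤ x + y)),
            if_neg (by omega : ¬ (1 ≤ x ∧ x ≤ m ∧ m + 1 ≤ x + y)),
            if_neg (by omega : ¬ (m + 1 ≤ x))]
          ring
        · have hypos : 0 < y := Nat.pos_of_ne_zero hy0
          have hs : (if 0 < x then 1 else 0) + (if 0 < y then 1 else 0) = 2 := by
            simp [hxpos, hypos]
          rw [hs]
          by_cases hxy : x + y ≤ m
          · -- region 3 : no ruin in the first period either way
            have h1 : psiAux l c T statRepN f q (T i 2)
                ((0:ℤ) + (c i : ℤ) - ((x:ℤ) + (y:ℤ) + (z:ℤ))) 0 n = C3 x y := by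
              rw [show (0:ℤ) + (c i : ℤ) - ((x:ℤ) + (y:ℤ) + (z:ℤ)) = ((m - x - y : ℕ):ℤ) by omega,
                hC3]
              rfl
            have h2 : psiAux l c T statRepN f q (T i 2)
                ((0:ℤ) + (c i : ℤ) - ((x:ℤ) + 0 + (z:ℤ))) y n = C3 x y := by
              rw [psiAux_shift hfnn hq0 hq1 hf hfsum (T i 2) _ ((m - x - y : ℕ):ℤ)
                (by omega) (by positivity) y 0 (by push_cast; omega) n, hC3]
              rfl
            rw [h1, h2, if_neg (by omega : ¬ x = 0),
              if_neg (by omega : ¬ (1 ≤ x ∧ x ≤ m ∧ y = 0)),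
              if_pos (⟨hxpos, hypos, hxy⟩ : 1 ≤ x ∧ 1 ≤ y ∧ x + y ≤ m),
              if_neg (by omega : ¬ (1 ≤ x ∧ x ≤ m ∧ m + 1 ≤ x + y)),
              if_neg (by omega : ¬ (1 ≤ x ∧ x ≤ m ∧ m + 1 ≤ x + y)),
              if_neg (by omega : ¬ (m + 1 ≤ x))]
            ring
          · -- region 4 : ruin if not delayed, pending claim if delayed
            have h1 : psiAux l c T statRepN f q (T i 2)
                ((0:ℤ) + (c i : ℤ) - ((x:ℤ) + (y:ℤ) + (z:ℤ))) 0 n = 1 := if_pos (by omega)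
            have h2 : psiAux l c T statRepN f q (T i 2)
                ((0:ℤ) + (c i : ℤ) - ((x:ℤ) + 0 + (z:ℤ))) y n = C4 (y - (m - x)) := by
              rw [psiAux_shift hfnn hq0 hq1 hf hfsum (T i 2) _ (0:ℤ)
                (by omega) le_rfl y (y - (m - x)) (by omega) n, hC4]
            rw [h1, h2, if_neg (by omega : ¬ x = 0),
              if_neg (by omega : ¬ (1 ≤ x ∧ x ≤ m ∧ y = 0)),
              if_neg (by omega : ¬ (1 ≤ x ∧ 1 ≤ y ∧ x + y ≤ m)),
              if_pos (⟨hxpos, by omega, by omega⟩ : 1 ≤ x ∧ x ≤ m ∧ m + 1 ≤ x + y),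
              if_pos (⟨hxpos, by omega, by omega⟩ : 1 ≤ x ∧ x ≤ m ∧ m + 1 ≤ x + y),
              if_neg (by omega : ¬ (m + 1 ≤ x))]
            ring
  -- bounds for the psi values
  have hC10 : 0 ≤ C1 := by rw [hC1]; exact psiAux_nonneg hfnn hq0 hq1 _ _ _ _
  have hC11 : C1 ≤ 1 := by rw [hC1]; exact psiAux_le_one hfnn hq0 hq1 hf hfsum _ _ _ _
  have hC20 : ∀ x, 0 ≤ C2 x := fun x => by
    rw [hC2]; exact psiAux_nonneg hfnn hq0 hq1 _ _ _ _
  have hC21 : ∀ x, C2 x ≤ 1 := fun x => by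
    rw [hC2]; exact psiAux_le_one hfnn hq0 hq1 hf hfsum _ _ _ _
  have hC30 : ∀ x y, 0 ≤ C3 x y := fun x y => by
    rw [hC3]; exact psiAux_nonneg hfnn hq0 hq1 _ _ _ _
  have hC31 : ∀ x y, C3 x y ≤ 1 := fun x y => by
    rw [hC3]; exact psiAux_le_one hfnn hq0 hq1 hf hfsum _ _ _ _
  have hC40 : ∀ k, 0 ≤ C4 k := fun k => by
    rw [hC4]; exact psiAux_nonneg hfnn hq0 hq1 _ _ _ _
  have hC41 : ∀ k, C4 k ≤ 1 := fun k => by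
    rw [hC4]; exact psiAux_le_one hfnn hq0 hq1 hf hfsum _ _ _ _
  -- summability of the six pieces
  have hS1 : Summable (fun p : ℕ × ℕ => if p.1 = 0 then f p.1 p.2 * C1 else 0) := by
    refine Summable.of_nonneg_of_le (fun p => ?_) (fun p => ?_) hf
    · split
      · exact mul_nonneg (hfnn _ _) hC10
      · exact le_rfl
    · split
      · simpa using mul_le_mul_of_nonneg_left hC11 (hfnn p.1 p.2)
      · exact hfnn _ _
  have hS2 : Summable (fun p : ℕ × ℕ =>
      if 1 ≤ p.1 ∧ p.1 ≤ m ∧ p.2 = 0 then f p.1 p.2 * C2 p.1 else 0) := by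
    refine Summable.of_nonneg_of_le (fun p => ?_) (fun p => ?_) hf
    · split
      · exact mul_nonneg (hfnn _ _) (hC20 _)
      · exact le_rfl
    · split
      · simpa using mul_le_mul_of_nonneg_left (hC21 p.1) (hfnn p.1 p.2)
      · exact hfnn _ _
  have hS3 : Summable (fun p : ℕ × ℕ =>
      if 1 ≤ p.1 ∧ 1 ≤ p.2 ∧ p.1 + p.2 ≤ m then f p.1 p.2 * C3 p.1 p.2 else 0) := by
    refine Summable.of_nonneg_of_le (fun p => ?_) (fun p => ?_) hf
    · split
      · exact mul_nonneg (hfnn _ _) (hC30 _ _)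
      · exact le_rfl
    · split
      · simpa using mul_le_mul_of_nonneg_left (hC31 p.1 p.2) (hfnn p.1 p.2)
      · exact hfnn _ _
  have hS4a : Summable (fun p : ℕ × ℕ =>
      if 1 ≤ p.1 ∧ p.1 ≤ m ∧ m + 1 ≤ p.1 + p.2
        then (1 - q) * (f p.1 p.2 * (fun _ : ℕ => (1:ℝ)) (p.2 - (m - p.1))) else 0) := by
    refine Summable.of_nonneg_of_le (fun p => ?_) (fun p => ?_) hf
    · dsimp only; split
      · exact mul_nonneg (by linarith) (by simpa using hfnn p.1 p.2)
      · exact le_rfl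
    · dsimp only; split
      · have h1 : (1 - q) * (f p.1 p.2 * 1) ≤ 1 * (f p.1 p.2 * 1) :=
          mul_le_mul_of_nonneg_right (by linarith) (by simpa using hfnn p.1 p.2)
        simpa using h1
      · exact hfnn _ _
  have hS4b : Summable (fun p : ℕ × ℕ =>
      if 1 ≤ p.1 ∧ p.1 ≤ m ∧ m + 1 ≤ p.1 + p.2
        then q * (f p.1 p.2 * C4 (p.2 - (m - p.1))) else 0) := by
    refine Summable.of_nonneg_of_le (fun p => ?_) (fun p => ?_) hf
    · split
      · exact mul_nonneg hq0 (mul_nonneg (hfnn _ _) (hC40 _))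
      · exact le_rfl
    · split
      · calc q * (f p.1 p.2 * C4 (p.2 - (m - p.1)))
            ≤ 1 * (f p.1 p.2 * 1) := by
              refine mul_le_mul hq1 ?_ (mul_nonneg (hfnn _ _) (hC40 _)) zero_le_one
              exact mul_le_mul_of_nonneg_left (hC41 _) (hfnn _ _)
          _ = f p.1 p.2 := by ring
      · exact hfnn _ _
  have hS5 : Summable (fun p : ℕ × ℕ => if m + 1 ≤ p.1 then f p.1 p.2 else 0) := by
    refine Summable.of_nonneg_of_le (fun p => ?_) (fun p => ?_) hf
    · split
      · exact hfnn _ _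
      · exact le_rfl
    · split
      · exact le_rfl
      · exact hfnn _ _
  refine Eq.trans (tsum_congr hpt) ?_
  rw [Summable.tsum_add ((((hS1.add hS2).add hS3).add hS4a).add hS4b) hS5,
    Summable.tsum_add (((hS1.add hS2).add hS3).add hS4a) hS4b,
    Summable.tsum_add ((hS1.add hS2).add hS3) hS4a,
    Summable.tsum_add (hS1.add hS2) hS3,
    Summable.tsum_add hS1 hS2]
  rw [tsum_R1 hfnn hfdeg C1, tsum_R2 m C2, tsum_R3 m C3,
    tsum_R4 hfnn hf m (1 - q) (by linarith) (by linarith) (fun _ => (1:ℝ))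
      (fun k => zero_le_one) (fun k => le_rfl),
    tsum_R4 hfnn hf m q hq0 hq1 C4 hC40 hC41,
    tsum_R5 hfnn hf m]
  have hone : ∑' k : ℕ, (fun _ : ℕ => (1:ℝ)) (k + 1) * xi f (k + 1) m =
      ∑' k : ℕ, xi f (k + 1) m := tsum_congr (fun k => one_mul _)
  rw [hone, hC1, hC2, hC3, hC4]
end Main

section Final
/-- Corollary 3: recursion for ψ'_i(0; z, ·) when premiums are adjusted according to
the reported number of claims. -/
theorem corollary3_reported_number
    (l : ℕ) (c : Fin l → ℕ) (hcpos : ∀ i, 0 < c i) (hcmono : StrictMono c)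
    (f : ℕ → ℕ → ℝ) (hfnn : ∀ x y, 0 ≤ f x y)
    (hfsum : ∑' p : ℕ × ℕ, f p.1 p.2 = 1)
    (hfdeg : ∀ y : ℕ, 0 < y → f 0 y = 0)
    (q : ℝ) (hq0 : 0 ≤ q) (hq1 : q ≤ 1)
    (t : Fin l → Fin l → ℕ → ℝ) (T : Fin l → ℕ → Fin l)
    (hT : ∀ i j s, t i j s = if j = T i s then (1 : ℝ) else 0)
    (i : Fin l) (z : ℕ) (hz1 : 0 < z) (hz2 : z ≤ c i) (n : ℕ) (hn : 1 ≤ n) :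
    psiAux l c T statRepN f q i 0 z (n + 1) =
        (∑ j : Fin l, t i j 0 * psi l c T statRepN f q j ((c i - z : ℕ) : ℤ) n * f 0 0)
      + (∑ j : Fin l, t i j 1 * (∑ x ∈ Finset.Icc 1 (c i - z),
          psi l c T statRepN f q j ((c i - z - x : ℕ) : ℤ) n * f x 0))
      + (∑ j : Fin l, t i j 2 *
          ((∑ x ∈ Finset.Icc 1 (c i - z - 1), ∑ y ∈ Finset.Icc 1 (c i - z - x),
              psi l c T statRepN f q j ((c i - z - x - y : ℕ) : ℤ) n * f x y)
            + q * (∑ y ∈ Finset.Icc 1 (c j),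
                psiAux l c T statRepN f q j 0 y n * xi f y (c i - z))
            + q * (∑' k : ℕ, xi f (c j + 1 + k) (c i - z))))
      + (1 - q) * (∑' k : ℕ, xi f (k + 1) (c i - z))
      + (∑' k : ℕ, fX f (c i - z + 1 + k)) ∧
    psiAux l c T statRepN f q i 0 z 1 =
      (1 - q) * (∑' k : ℕ, xi f (k + 1) (c i - z))
      + (∑' k : ℕ, fX f (c i - z + 1 + k)) := by
  have hf := summable_f hfnn hfsum
  set m := c i - z with hmdef
  have hm : c i = m + z := by omega
  have hts : ∀ (s : ℕ) (A : Fin l → ℝ), (∑ j : Fin l, t i j s * A j) = A (T i s) := by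
    intro s A
    rw [Finset.sum_eq_single (T i s)]
    · rw [hT]; simp
    · intro j _ hj
      rw [hT, if_neg hj, zero_mul]
    · intro h; exact absurd (Finset.mem_univ _) h
  have hxi0 : ∀ y k, 0 ≤ xi f y k := fun y k => Finset.sum_nonneg (fun x _ => hfnn _ _)
  have hxsum : Summable (fun k : ℕ => xi f (k + 1) m) := by
    have h1 : ∀ x ∈ Finset.Icc 1 m, Summable (fun k : ℕ => f x (k + 1 + m - x)) := by
      intro x hx
      simp only [Finset.mem_Icc] at hx
      have he : (fun k : ℕ => f x (k + 1 + m - x)) = (fun k : ℕ => f x (k + (m + 1 - x))) := by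
        funext k; congr 1; omega
      rw [he]; exact summable_shift hf x (m + 1 - x)
    exact summable_sum h1
  constructor
  · -- the recursion over horizon n + 1 (n ≥ 1)
    obtain ⟨n', rfl⟩ : ∃ n', n = n' + 1 := ⟨n - 1, by omega⟩
    rw [main_formula l c T f hfnn hfsum hfdeg q hq0 hq1 i z m hm (n' + 1)]
    rw [hts 1 (fun j => ∑ x ∈ Finset.Icc 1 m,
        psi l c T statRepN f q j ((m - x : ℕ) : ℤ) (n' + 1) * f x 0),
      hts 2 (fun j =>
        (∑ x ∈ Finset.Icc 1 (m - 1), ∑ y ∈ Finset.Icc 1 (m - x),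
            psi l c T statRepN f q j ((m - x - y : ℕ) : ℤ) (n' + 1) * f x y)
          + q * (∑ y ∈ Finset.Icc 1 (c j),
              psiAux l c T statRepN f q j 0 y (n' + 1) * xi f y m)
          + q * (∑' k : ℕ, xi f (c j + 1 + k) m))]
    have h0 : (∑ j : Fin l, t i j 0 * psi l c T statRepN f q j ((m : ℕ) : ℤ) (n' + 1) * f 0 0)
        = psi l c T statRepN f q (T i 0) ((m : ℕ) : ℤ) (n' + 1) * f 0 0 := by
      rw [← hts 0 (fun j => psi l c T statRepN f q j ((m : ℕ) : ℤ) (n' + 1) * f 0 0)]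
      exact Finset.sum_congr rfl (fun j _ => by ring)
    rw [h0]
    -- commute the products inside the finite sums
    have e2 : (∑ x ∈ Finset.Icc 1 m,
        psi l c T statRepN f q (T i 1) ((m - x : ℕ) : ℤ) (n' + 1) * f x 0)
        = ∑ x ∈ Finset.Icc 1 m,
          f x 0 * psi l c T statRepN f q (T i 1) ((m - x : ℕ) : ℤ) (n' + 1) :=
      Finset.sum_congr rfl (fun x _ => mul_comm _ _)
    have e3 : (∑ x ∈ Finset.Icc 1 (m - 1), ∑ y ∈ Finset.Icc 1 (m - x),
        psi l c T statRepN f q (T i 2) ((m - x - y : ℕ) : ℤ) (n' + 1) * f x y)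
        = ∑ x ∈ Finset.Icc 1 (m - 1), ∑ y ∈ Finset.Icc 1 (m - x),
          f x y * psi l c T statRepN f q (T i 2) ((m - x - y : ℕ) : ℤ) (n' + 1) :=
      Finset.sum_congr rfl (fun x _ => Finset.sum_congr rfl (fun y _ => mul_comm _ _))
    rw [e2, e3]
    -- split the infinite sum with pending delayed by-claims at c (T i 2)
    have hgsum : Summable (fun k : ℕ =>
        psiAux l c T statRepN f q (T i 2) 0 (k + 1) (n' + 1) * xi f (k + 1) m) := by
      refine Summable.of_nonneg_of_le (fun k => ?_) (fun k => ?_) hxsum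
      · exact mul_nonneg (psiAux_nonneg hfnn hq0 hq1 _ _ _ _) (hxi0 _ _)
      · simpa using mul_le_mul_of_nonneg_right
          (psiAux_le_one hfnn hq0 hq1 hf hfsum (T i 2) 0 (k + 1) (n' + 1)) (hxi0 (k + 1) m)
    have hqsplit : (∑' k : ℕ,
        psiAux l c T statRepN f q (T i 2) 0 (k + 1) (n' + 1) * xi f (k + 1) m)
        = (∑ y ∈ Finset.Icc 1 (c (T i 2)),
            psiAux l c T statRepN f q (T i 2) 0 y (n' + 1) * xi f y m)
          + ∑' k : ℕ, xi f (c (T i 2) + 1 + k) m := by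
      rw [← Summable.sum_add_tsum_nat_add (c (T i 2)) hgsum]
      congr 1
      · rw [show Finset.Icc 1 (c (T i 2)) = Finset.Ico 1 (c (T i 2) + 1) from
            (Finset.Ico_add_one_right_eq_Icc 1 (c (T i 2))).symm, Finset.sum_Ico_eq_sum_range]
        simp only [Nat.add_sub_cancel]
        exact Finset.sum_congr rfl (fun k _ => by rw [Nat.add_comm 1 k])
      · refine tsum_congr (fun k => ?_)
        rw [psiAux_one_of_big hfnn hq0 hq1 hf hfsum (T i 2) (k + c (T i 2) + 1)
          (by omega) n', one_mul]
        congr 1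
        omega
    rw [hqsplit]
    ring
  · -- horizon 1
    rw [main_formula l c T f hfnn hfsum hfdeg q hq0 hq1 i z m hm 0]
    have hz0 : ∀ (j : Fin l) (u : ℤ), 0 ≤ u → psi l c T statRepN f q j u 0 = 0 :=
      fun j u hu => psiAux_zero j u hu 0
    rw [hz0 (T i 0) _ (by positivity)]
    have e2 : (∑ x ∈ Finset.Icc 1 m,
        f x 0 * psi l c T statRepN f q (T i 1) ((m - x : ℕ) : ℤ) 0) = 0 :=
      Finset.sum_eq_zero (fun x _ => by rw [hz0 _ _ (by positivity), mul_zero])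
    have e3 : (∑ x ∈ Finset.Icc 1 (m - 1), ∑ y ∈ Finset.Icc 1 (m - x),
        f x y * psi l c T statRepN f q (T i 2) ((m - x - y : ℕ) : ℤ) 0) = 0 :=
      Finset.sum_eq_zero (fun x _ => Finset.sum_eq_zero
        (fun y _ => by rw [hz0 _ _ (by positivity), mul_zero]))
    have e4 : (∑' k : ℕ, psiAux l c T statRepN f q (T i 2) 0 (k + 1) 0 * xi f (k + 1) m)
        = 0 := by
      have : ∀ k : ℕ, psiAux l c T statRepN f q (T i 2) 0 (k + 1) 0 * xi f (k + 1) m = 0 :=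
        fun k => by rw [psiAux_zero _ _ le_rfl _, zero_mul]
      rw [tsum_congr this, tsum_zero]
    rw [e2, e3, e4]
    ring
end Final

end DelayedClaims
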